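/- arXiv:2602.10277 — 2 statements merged into one kernel-verified Lean document; each statement's English description precedes it below -/
import Mathlib

section
/- Fix an integer N ≥ 2 and Γ > 0. There is a constant C > 0, depending only on N and Γ, such that for every Γ-bounded configuration of the blind-source-separation setup the quantity u in the decomposition w_e − w₀ = u·w₀ + w_⊥ can be written as u = u₀ + u₁, where u₀ is real with u₀ ≥ −1 and |u₀| ≤ C·( max_{p≠q}|C^s_{pq}| + ‖w_⊥‖ ), and u₁ ∈ ℂ with |u₁| ≤ C·max_{p≠q}|C^s_{pq}|. -/
open MeasureTheory ProbabilityTheory Complex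
open scoped ComplexConjugate

noncomputable section

namespace BSS

variable {N : ℕ} {Ω : Type} [MeasurableSpace Ω]

/-- The observed random vector `x = A s + n`. -/
def xvec (A : Matrix (Fin N) (Fin N) ℂ) (s n : Ω → Fin N → ℂ) (ω : Ω) : Fin N → ℂ :=
  A.mulVec (s ω) + n ω

/-- The source correlation matrix `C^s = 𝔼{s s*}`. -/
def Cs (μ : Measure Ω) (s : Ω → Fin N → ℂ) : Matrix (Fin N) (Fin N) ℂ :=
  Matrix.of fun i j => ∫ ω, s ω i * conj (s ω j) ∂μ

/-- The noise correlation matrix `C^n = 𝔼{n n*}`. -/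
def Cn (μ : Measure Ω) (n : Ω → Fin N → ℂ) : Matrix (Fin N) (Fin N) ℂ :=
  Matrix.of fun i j => ∫ ω, n ω i * conj (n ω j) ∂μ

/-- `c₁`: the `i₁` column of `(A⁻¹)*`. -/
def c1 (A : Matrix (Fin N) (Fin N) ℂ) (i1 : Fin N) : EuclideanSpace ℂ (Fin N) :=
  (WithLp.equiv 2 _).symm fun j => conj (A⁻¹ i1 j)

/-- `w₀ = c₁ / ‖c₁‖`. -/
def w0 (A : Matrix (Fin N) (Fin N) ℂ) (i1 : Fin N) : EuclideanSpace ℂ (Fin N) :=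
  ‖c1 A i1‖⁻¹ • c1 A i1

/-- `y = w* x`. -/
def yproj (A : Matrix (Fin N) (Fin N) ℂ) (s n : Ω → Fin N → ℂ)
    (w : EuclideanSpace ℂ (Fin N)) (ω : Ω) : ℂ :=
  ∑ j, conj (w j) * xvec A s n ω j

/-- The kurtosis contrast `K(w) = 𝔼|y|⁴ − 2 − |𝔼 y²|²` (for pre-whitened data). -/
def Kf (μ : Measure Ω) (A : Matrix (Fin N) (Fin N) ℂ) (s n : Ω → Fin N → ℂ)
    (w : EuclideanSpace ℂ (Fin N)) : ℝ :=
  (∫ ω, ‖yproj A s n w ω‖ ^ 4 ∂μ) - 2 - ‖∫ ω, (yproj A s n w ω) ^ 2 ∂μ‖ ^ 2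

/-- `κ₁ = 𝔼|s₁|⁴ − 2 − |𝔼 s₁²|²`. -/
def kappa1 (μ : Measure Ω) (s : Ω → Fin N → ℂ) (i1 : Fin N) : ℝ :=
  (∫ ω, ‖s ω i1‖ ^ 4 ∂μ) - 2 - ‖∫ ω, (s ω i1) ^ 2 ∂μ‖ ^ 2

/-- The source–dependence functional `M^s`. -/
def Ms (μ : Measure Ω) (s : Ω → Fin N → ℂ) (i1 : Fin N) : ℝ :=
  (⨆ j : Fin N, if j = i1 then 0 else
      |(∫ ω, ‖s ω j‖ ^ 2 * ‖s ω i1‖ ^ 2 ∂μ) -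
          (∫ ω, ‖s ω j‖ ^ 2 ∂μ) * (∫ ω, ‖s ω i1‖ ^ 2 ∂μ)| +
      ‖(∫ ω, (s ω j) ^ 2 * (conj (s ω i1)) ^ 2 ∂μ) -
          (∫ ω, (s ω j) ^ 2 ∂μ) * (∫ ω, (conj (s ω i1)) ^ 2 ∂μ)‖)
  + (⨆ p : Fin N × Fin N, if p.1 ≠ i1 ∧ p.2 ≠ i1 ∧ p.1 ≠ p.2 then
      ‖(∫ ω, s ω p.2 * s ω p.1 * (conj (s ω i1)) ^ 2 ∂μ) -
          (∫ ω, s ω p.2 * s ω p.1 ∂μ) * (∫ ω, (conj (s ω i1)) ^ 2 ∂μ)‖ +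
      ‖(∫ ω, s ω p.2 * conj (s ω p.1) * (s ω i1 * conj (s ω i1)) ∂μ) -
          (∫ ω, s ω p.2 * s ω i1 ∂μ) * (∫ ω, conj (s ω p.1) * conj (s ω i1) ∂μ)‖
    else 0)
  + (⨆ p : Fin N × Fin N, ‖(Cs μ s - 1) p.1 p.2‖)

/-- The noise size functional `M^n`. -/
def Mn (μ : Measure Ω) (n : Ω → Fin N → ℂ) : ℝ :=
  ⨆ j : Fin N, ((∫ ω, ‖n ω j‖ ^ 2 ∂μ) + ∫ ω, ‖n ω j‖ ^ 4 ∂μ)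

/-- Entrywise maximum norm of a matrix. -/
def mnorm (M : Matrix (Fin N) (Fin N) ℂ) : ℝ := ⨆ i, ⨆ j, ‖M i j‖

/-- A configuration is `Γ`-bounded. -/
def GammaBounded (Γ : ℝ) (μ : Measure Ω) (A : Matrix (Fin N) (Fin N) ℂ)
    (s n : Ω → Fin N → ℂ) : Prop :=
  mnorm A ≤ Γ ∧ mnorm A⁻¹ ≤ Γ ∧ mnorm (Cs μ s)⁻¹ ≤ Γ ∧
  (∀ i, (∫ ω, ‖s ω i‖ ^ 8 ∂μ) ≤ Γ) ∧ (∀ i, (∫ ω, ‖n ω i‖ ^ 8 ∂μ) ≤ Γ)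

/-- `w_e = w̃_e · e^{i arg⟨w̃_e, w₀⟩}`. -/
def wE (wte w0v : EuclideanSpace ℂ (Fin N)) : EuclideanSpace ℂ (Fin N) :=
  Complex.exp (Complex.I * ((inner ℂ wte w0v : ℂ).arg : ℂ)) • wte

end BSS

namespace BSS

variable {N : ℕ} {Ω : Type} [MeasurableSpace Ω]

/-- `(C^s)⁻¹ w₀`. -/
def CsInvW0 (μ : Measure Ω) (s : Ω → Fin N → ℂ) (A : Matrix (Fin N) (Fin N) ℂ)
    (i1 : Fin N) : EuclideanSpace ℂ (Fin N) :=
  (WithLp.equiv 2 _).symm ((Cs μ s)⁻¹.mulVec ((WithLp.equiv 2 _) (w0 A i1)))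

/-- The coefficient `u = ⟨(C^s)⁻¹w₀, w⟩ / ⟨(C^s)⁻¹w₀, w₀⟩`. -/
def uCoef (μ : Measure Ω) (s : Ω → Fin N → ℂ) (A : Matrix (Fin N) (Fin N) ℂ)
    (i1 : Fin N) (wvec : EuclideanSpace ℂ (Fin N)) : ℂ :=
  (inner ℂ (CsInvW0 μ s A i1) wvec : ℂ) / (inner ℂ (CsInvW0 μ s A i1) (w0 A i1) : ℂ)

/-- `w_⊥ = w − u·w₀`. -/
def wPerp (μ : Measure Ω) (s : Ω → Fin N → ℂ) (A : Matrix (Fin N) (Fin N) ℂ)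
    (i1 : Fin N) (wvec : EuclideanSpace ℂ (Fin N)) : EuclideanSpace ℂ (Fin N) :=
  wvec - uCoef μ s A i1 wvec • w0 A i1

/-- Maximum modulus of the off-diagonal entries. -/
def offMax (M : Matrix (Fin N) (Fin N) ℂ) : ℝ :=
  ⨆ p : Fin N × Fin N, if p.1 = p.2 then 0 else ‖M p.1 p.2‖

end BSS


namespace BSSAux
open BSS MeasureTheory Complex
open scoped ComplexConjugate

variable {N : ℕ} {Ω : Type} [MeasurableSpace Ω] {μ : Measure Ω} [IsProbabilityMeasure μ]
  {s : Ω → Fin N → ℂ}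

lemma aux_sq_le (a : ℝ) (_ : 0 ≤ a) : a^2 ≤ 1 + a^8 := by
  nlinarith [sq_nonneg (a^4-1), sq_nonneg (a^2-1), sq_nonneg a, sq_nonneg (a^2+1)]

lemma meas_comp (hs : Measurable s) (i : Fin N) : Measurable fun ω => s ω i :=
  (measurable_pi_apply i).comp hs

lemma int_norm_mul (hs : Measurable s) (hI : ∀ i, Integrable (fun ω => ‖s ω i‖^8) μ)
    (i j : Fin N) : Integrable (fun ω => ‖s ω i‖ * ‖s ω j‖) μ := by
  apply Integrable.mono' (g := fun ω => 1 + (‖s ω i‖^8 + ‖s ω j‖^8))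
    ((integrable_const 1).add ((hI i).add (hI j)))
  · exact ((meas_comp hs i).norm.mul (meas_comp hs j).norm).aestronglyMeasurable
  · filter_upwards with ω
    have hi := norm_nonneg (s ω i); have hj := norm_nonneg (s ω j)
    have h1 := aux_sq_le _ hi; have h2 := aux_sq_le _ hj
    rw [Real.norm_eq_abs, _root_.abs_of_nonneg (mul_nonneg hi hj)]
    nlinarith [sq_nonneg (‖s ω i‖ - ‖s ω j‖), pow_nonneg hi 8, pow_nonneg hj 8]

lemma int_normsq (hs : Measurable s) (hI : ∀ i, Integrable (fun ω => ‖s ω i‖^8) μ)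
    (i : Fin N) : Integrable (fun ω => ‖s ω i‖^2) μ := by
  have := int_norm_mul hs hI i i
  simpa [pow_two] using this

lemma int_mul_conj (hs : Measurable s) (hI : ∀ i, Integrable (fun ω => ‖s ω i‖^8) μ)
    (i j : Fin N) : Integrable (fun ω => s ω i * conj (s ω j)) μ := by
  apply (int_norm_mul hs hI i j).mono'
  · exact ((meas_comp hs i).mul
      (continuous_star.measurable.comp (meas_comp hs j))).aestronglyMeasurable
  · filter_upwards with ω
    simp

lemma memL2 (hs : Measurable s) (hI : ∀ i, Integrable (fun ω => ‖s ω i‖^8) μ)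
    (i : Fin N) : MemLp (fun ω => s ω i) 2 μ := by
  rw [memLp_two_iff_integrable_sq_norm (meas_comp hs i).aestronglyMeasurable]
  exact int_normsq hs hI i

lemma memT (hs : Measurable s) (hI : ∀ i, Integrable (fun ω => ‖s ω i‖^8) μ)
    (x : Fin N → ℂ) : MemLp (fun ω => ∑ i, x i * conj (s ω i)) 2 μ := by
  apply memLp_finset_sum
  intro i _
  exact ((memL2 hs hI i).of_le
    ((continuous_star.measurable.comp (meas_comp hs i)).aestronglyMeasurable)
    (ae_of_all _ fun ω => by simp)).const_mul (x i)

/-- The quadratic form of the matrix `Cs`. -/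
noncomputable def Qf {N : ℕ} {Ω : Type} [MeasurableSpace Ω] (μ : Measure Ω)
    (s : Ω → Fin N → ℂ) (x y : Fin N → ℂ) : ℂ :=
  ∑ i, ∑ j, conj (x i) * (Cs μ s i j) * y j

lemma Qf_eq_integral (hs : Measurable s) (hI : ∀ i, Integrable (fun ω => ‖s ω i‖^8) μ)
    (x y : Fin N → ℂ) :
    Qf μ s x y = ∫ ω, conj (∑ i, x i * conj (s ω i)) * (∑ j, y j * conj (s ω j)) ∂μ := by
  have hint : ∀ (i j : Fin N),
      Integrable (fun ω => (conj (x i) * y j) * (s ω i * conj (s ω j))) μ :=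
    fun i j => (int_mul_conj hs hI i j).const_mul _
  calc Qf μ s x y = ∑ i, ∑ j, (conj (x i) * y j) * ∫ ω, s ω i * conj (s ω j) ∂μ := by
        simp only [Qf, Cs, Matrix.of_apply]; congr 1; ext i; congr 1; ext j; ring
    _ = ∑ i, ∑ j, ∫ ω, (conj (x i) * y j) * (s ω i * conj (s ω j)) ∂μ := by
        simp_rw [MeasureTheory.integral_const_mul]
    _ = ∫ ω, ∑ i, ∑ j, (conj (x i) * y j) * (s ω i * conj (s ω j)) ∂μ := by
        rw [integral_finset_sum _ fun i _ => integrable_finset_sum _ fun j _ => hint i j]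
        congr 1; ext i
        rw [integral_finset_sum _ fun j _ => hint i j]
    _ = _ := by
        congr 1; ext ω
        rw [map_sum, Finset.sum_mul_sum]
        congr 1; ext i; congr 1; ext j
        simp only [map_mul, RingHomCompTriple.comp_apply, RingHom.id_apply,
          Complex.conj_conj]
        ring

lemma Qf_repr (hs : Measurable s) (hI : ∀ i, Integrable (fun ω => ‖s ω i‖^8) μ)
    (x y : Fin N → ℂ) :
    Qf μ s x y = (inner ℂ ((memT hs hI x).toLp _) ((memT hs hI y).toLp _) : ℂ) := by
  rw [Qf_eq_integral hs hI, L2.inner_def]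
  apply integral_congr_ae
  filter_upwards [(memT hs hI x).coeFn_toLp, (memT hs hI y).coeFn_toLp] with ω h1 h2
  rw [RCLike.inner_apply, h1, h2, mul_comm]

lemma Qf_self (hs : Measurable s) (hI : ∀ i, Integrable (fun ω => ‖s ω i‖^8) μ)
    (x : Fin N → ℂ) :
    Qf μ s x x = ((‖(memT hs hI x).toLp _‖^2 : ℝ) : ℂ) := by
  rw [Qf_repr hs hI, inner_self_eq_norm_sq_to_K]; norm_num

lemma Qf_cs (hs : Measurable s) (hI : ∀ i, Integrable (fun ω => ‖s ω i‖^8) μ)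
    (x y : Fin N → ℂ) :
    ‖Qf μ s x y‖^2 ≤ (Qf μ s x x).re * (Qf μ s y y).re := by
  rw [Qf_repr hs hI x y, Qf_self hs hI x, Qf_self hs hI y]
  simp only [Complex.ofReal_re]
  calc ‖(inner ℂ ((memT hs hI x).toLp _) ((memT hs hI y).toLp _) : ℂ)‖^2
      ≤ (‖(memT hs hI x).toLp _‖ * ‖(memT hs hI y).toLp _‖)^2 := by
        apply pow_le_pow_left₀ (norm_nonneg _) (norm_inner_le_norm _ _)
    _ = _ := by ring

lemma norm_le_mnorm {M : Matrix (Fin N) (Fin N) ℂ} (i j : Fin N) : ‖M i j‖ ≤ mnorm M := by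
  have h1 : ‖M i j‖ ≤ ⨆ j, ‖M i j‖ :=
    le_ciSup (Set.Finite.bddAbove (Set.finite_range fun j => ‖M i j‖)) j
  have h2 : (⨆ j, ‖M i j‖) ≤ mnorm M :=
    le_ciSup (Set.Finite.bddAbove (Set.finite_range fun i => ⨆ j, ‖M i j‖)) i
  exact h1.trans h2

lemma norm_le_offMax {M : Matrix (Fin N) (Fin N) ℂ} {p q : Fin N} (h : p ≠ q) :
    ‖M p q‖ ≤ offMax M := by
  have := le_ciSup (Set.Finite.bddAbove (Set.finite_range
    (fun p : Fin N × Fin N => if p.1 = p.2 then 0 else ‖M p.1 p.2‖))) (p, q)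
  simpa [offMax, h] using this

lemma offMax_nonneg (hN : 0 < N) (M : Matrix (Fin N) (Fin N) ℂ) : 0 ≤ offMax M := by
  have := le_ciSup (Set.Finite.bddAbove (Set.finite_range
    (fun p : Fin N × Fin N => if p.1 = p.2 then 0 else ‖M p.1 p.2‖)))
    ((⟨0, hN⟩ : Fin N), (⟨0, hN⟩ : Fin N))
  simpa [offMax] using this

lemma coord_le_norm (x : EuclideanSpace ℂ (Fin N)) (i : Fin N) : ‖x i‖ ≤ ‖x‖ := by
  rw [EuclideanSpace.norm_eq]
  refine le_trans ?_ (Real.sqrt_le_sqrt (Finset.single_le_sum (f := fun j => ‖x j‖^2)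
    (fun j _ => sq_nonneg _) (Finset.mem_univ i)))
  rw [Real.sqrt_sq (norm_nonneg _)]

lemma norm_le_of_coords (hN : 0 < N) {x : EuclideanSpace ℂ (Fin N)} {c : ℝ} (hc : 0 ≤ c)
    (h : ∀ i, ‖x i‖ ≤ c) : ‖x‖ ≤ N * c := by
  have hN1 : (1:ℝ) ≤ N := by exact_mod_cast hN
  rw [EuclideanSpace.norm_eq]
  have h1 : ∑ i : Fin N, ‖x i‖^2 ≤ (N:ℝ) * c^2 := by
    calc ∑ i : Fin N, ‖x i‖^2 ≤ ∑ _i : Fin N, c^2 :=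
          Finset.sum_le_sum fun i _ => pow_le_pow_left₀ (norm_nonneg _) (h i) 2
      _ = (N:ℝ) * c^2 := by simp [Finset.sum_const, Finset.card_univ]
  calc Real.sqrt (∑ i : Fin N, ‖x i‖^2) ≤ Real.sqrt (((N:ℝ)*c)^2) := by
        apply Real.sqrt_le_sqrt; nlinarith
    _ = (N:ℝ) * c := Real.sqrt_sq (by positivity)

end BSSAux

set_option maxHeartbeats 2000000 in
open BSS in
/-- (Lemma `lemU`) The coefficient `u` in `w_e − w₀ = u·w₀ + w_⊥`
splits as `u = u₀ + u₁` with `u₀ ≥ −1` real, `|u₀| = O(max_{p≠q}|C^s_{pq}| + ‖w_⊥‖)`,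
and `|u₁| = O(max_{p≠q}|C^s_{pq}|)`, uniformly over `Γ`-bounded configurations. -/
theorem bss_u_decomposition (N : ℕ) (hN : 2 ≤ N) (Γ : ℝ) (hΓ : 0 < Γ) :
    ∃ C > (0 : ℝ),
      ∀ (Ω : Type) [MeasurableSpace Ω] (μ : Measure Ω) [IsProbabilityMeasure μ]
        (A : Matrix (Fin N) (Fin N) ℂ) (s n : Ω → Fin N → ℂ),
        IsUnit A.det →
        Measurable s → Measurable n →
        IndepFun s n μ →
        (∀ i, Integrable (fun ω => ‖s ω i‖ ^ 8) μ) →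
        (∀ i, Integrable (fun ω => ‖n ω i‖ ^ 8) μ) →
        (∀ i, ∫ ω, s ω i ∂μ = 0) →
        (∀ i, ∫ ω, n ω i ∂μ = 0) →
        (∀ i, ∫ ω, ‖s ω i‖ ^ 2 ∂μ = 1) →
        (∀ i j, ∫ ω, xvec A s n ω i * conj (xvec A s n ω j) ∂μ
            = if i = j then 1 else 0) →
        IsUnit (Cs μ s).det →
        GammaBounded Γ μ A s n →
        ∀ i1 : Fin N, i1 = ⟨0, by omega⟩ →
        kappa1 μ s i1 ≠ 0 →
        ∀ wte : EuclideanSpace ℂ (Fin N),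
          ‖wte‖ = 1 → 0 ≤ (inner ℂ wte (w0 A i1) : ℂ).re →
          (kappa1 μ s i1 < 0 →
            ∀ w : EuclideanSpace ℂ (Fin N), ‖w‖ = 1 → 0 ≤ (inner ℂ w (w0 A i1) : ℂ).re →
              Kf μ A s n wte ≤ Kf μ A s n w) →
          (0 < kappa1 μ s i1 →
            ∀ w : EuclideanSpace ℂ (Fin N), ‖w‖ = 1 → 0 ≤ (inner ℂ w (w0 A i1) : ℂ).re →
              Kf μ A s n w ≤ Kf μ A s n wte) →
          ∃ (u0 : ℝ) (u1 : ℂ),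
            uCoef μ s A i1 (wE wte (w0 A i1) - w0 A i1) = (u0 : ℂ) + u1 ∧
            -1 ≤ u0 ∧
            |u0| ≤ C * (offMax (Cs μ s)
                + ‖wPerp μ s A i1 (wE wte (w0 A i1) - w0 A i1)‖) ∧
            ‖u1‖ ≤ C * offMax (Cs μ s) := by
  have hN0 : 0 < N := by omega
  have hNpos : (0:ℝ) < N := by exact_mod_cast hN0
  have hN1 : (1:ℝ) ≤ N := by exact_mod_cast hN0
  refine ⟨12 * (N:ℝ)^4 * Γ + 4, by positivity, ?_⟩
  intro Ω _ μ _ A s n hAdet hs hn _ hIs _ _ _ hs2 _ hCsdet hGB i1 _ _ wte hwte _ _ _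
  obtain ⟨_, _, hGB3, _, _⟩ := hGB
  set w0v := w0 A i1 with hw0v
  set z := (inner ℂ wte w0v : ℂ) with hz
  set wEv := wE wte w0v with hwEv
  set wv : EuclideanSpace ℂ (Fin N) := wEv - w0v with hwv
  set vv := CsInvW0 μ s A i1 with hvv
  set d := (inner ℂ vv w0v : ℂ) with hd
  set m := offMax (Cs μ s) with hm
  set P := ‖wPerp μ s A i1 wv‖ with hP
  have hm0 : 0 ≤ m := BSSAux.offMax_nonneg hN0 _
  have hP0 : 0 ≤ P := norm_nonneg _
  -- ‖w₀‖ = 1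
  have hc1 : c1 A i1 ≠ 0 := by
    intro h
    have h1 : (A⁻¹ * A) i1 i1 = 1 := by
      rw [Matrix.nonsing_inv_mul A hAdet]; simp [Matrix.one_apply]
    rw [Matrix.mul_apply] at h1
    have hzero : ∀ j, A⁻¹ i1 j = 0 := by
      intro j
      have h2 := congrArg (fun v => v j) h
      simpa [c1] using h2
    simp [hzero] at h1
  have hw0n : ‖w0v‖ = 1 := by
    rw [hw0v, w0, norm_smul, norm_inv, norm_norm]
    exact inv_mul_cancel₀ (norm_ne_zero_iff.2 hc1)
  -- inner products with wE
  have habs0 : 0 ≤ ‖z‖ := norm_nonneg z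
  have habs1 : ‖z‖ ≤ 1 := by
    have h := norm_inner_le_norm (𝕜 := ℂ) wte w0v
    rw [hwte, hw0n] at h; simpa using h
  have hexp : Complex.exp (Complex.I * (z.arg:ℂ)) * conj z = ((‖z‖ : ℝ) : ℂ) := by
    have hconj : conj z = ((‖z‖ : ℝ):ℂ) * Complex.exp (-(z.arg:ℂ) * Complex.I) := by
      calc conj z = conj (((‖z‖ : ℝ):ℂ) * Complex.exp ((z.arg:ℂ) * Complex.I)) := by
            rw [Complex.norm_mul_exp_arg_mul_I z]
        _ = _ := by
            rw [map_mul, Complex.conj_ofReal, ← Complex.exp_conj, map_mul, Complex.conj_ofReal,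
              Complex.conj_I]
            ring_nf
    rw [hconj, mul_comm, mul_assoc, ← Complex.exp_add]
    have h0 : -(z.arg:ℂ) * Complex.I + Complex.I * (z.arg:ℂ) = 0 := by ring
    rw [h0, Complex.exp_zero, mul_one]
  have hinnwE : (inner ℂ w0v wEv : ℂ) = ((‖z‖ : ℝ) : ℂ) := by
    rw [hwEv, wE, inner_smul_right]
    have h9 : (inner ℂ w0v wte : ℂ) = conj z := by
      rw [hz]; exact (inner_conj_symm w0v wte).symm
    rw [h9]
    exact hexp
  have hwEn : ‖wEv‖ = 1 := by
    rw [hwEv, wE, norm_smul, hwte, mul_one, Complex.norm_exp]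
    norm_num [Complex.mul_re]
  have hwn2 : ‖wv‖ ≤ 2 := by
    rw [hwv]
    calc ‖wEv - w0v‖ ≤ ‖wEv‖ + ‖w0v‖ := norm_sub_le _ _
      _ = 2 := by rw [hwEn, hw0n]; norm_num
  have hwsq : ‖wv‖^2 = 2 - 2 * ‖z‖ := by
    rw [hwv, @norm_sub_sq ℂ, hwEn, hw0n]
    have hEw0 : (inner ℂ wEv w0v : ℂ) = ((‖z‖ : ℝ):ℂ) := by
      rw [← inner_conj_symm wEv w0v, hinnwE, Complex.conj_ofReal]
    rw [hEw0]
    simp [RCLike.re_to_complex]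
    ring
  have ht : (inner ℂ w0v wv : ℂ) = ((‖z‖ - 1 : ℝ) : ℂ) := by
    rw [hwv, inner_sub_right, hinnwE, inner_self_eq_norm_sq_to_K, hw0n]
    push_cast; ring
  -- matrix entry bounds
  have hBent : ∀ j k, ‖(Cs μ s)⁻¹ j k‖ ≤ Γ := fun j k =>
    le_trans (BSSAux.norm_le_mnorm j k) hGB3
  have hCdiag : ∀ i, Cs μ s i i = 1 := by
    intro i
    show (∫ ω, s ω i * conj (s ω i) ∂μ) = 1
    have he : (fun ω => s ω i * conj (s ω i)) = fun ω => ((‖s ω i‖^2 : ℝ) : ℂ) := by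
      funext ω
      rw [Complex.mul_conj, Complex.normSq_eq_norm_sq]
    rw [he]
    rw [show (∫ ω, ((‖s ω i‖^2 : ℝ) : ℂ) ∂μ) = (((∫ ω, ‖s ω i‖^2 ∂μ : ℝ)) : ℂ) from
      integral_ofReal, hs2 i, Complex.ofReal_one]
  have hCent : ∀ i j, ‖Cs μ s i j‖ ≤ 1 := by
    intro i j
    calc ‖Cs μ s i j‖ = ‖∫ ω, s ω i * conj (s ω j) ∂μ‖ := rfl
      _ ≤ ∫ ω, ‖s ω i * conj (s ω j)‖ ∂μ := norm_integral_le_integral_norm _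
      _ = ∫ ω, ‖s ω i‖ * ‖s ω j‖ ∂μ := by congr 1; funext ω; simp
      _ ≤ ∫ ω, (‖s ω i‖^2 + ‖s ω j‖^2)/2 ∂μ := by
          apply integral_mono (BSSAux.int_norm_mul hs hIs i j)
            (((BSSAux.int_normsq hs hIs i).add (BSSAux.int_normsq hs hIs j)).div_const 2)
          intro ω
          show ‖s ω i‖ * ‖s ω j‖ ≤ (‖s ω i‖^2 + ‖s ω j‖^2)/2
          nlinarith [sq_nonneg (‖s ω i‖ - ‖s ω j‖)]
      _ = 1 := by
          rw [integral_div, integral_add (BSSAux.int_normsq hs hIs i)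
            (BSSAux.int_normsq hs hIs j), hs2 i, hs2 j]
          norm_num
  have hoffd : ∀ l k, ‖(1 - Cs μ s) l k‖ ≤ m := by
    intro l k
    by_cases hlk : l = k
    · subst hlk
      simp [Matrix.sub_apply, Matrix.one_apply, hCdiag l, hm0]
    · rw [Matrix.sub_apply, Matrix.one_apply_ne hlk, zero_sub, norm_neg]
      exact BSSAux.norm_le_offMax hlk
  -- coordinates
  set w0f : Fin N → ℂ := fun k => w0v k with hw0f
  have hw0coord : ∀ k, ‖w0v k‖ ≤ 1 := fun k =>
    le_trans (BSSAux.coord_le_norm _ _) (le_of_eq hw0n)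
  set vf : Fin N → ℂ := (Cs μ s)⁻¹.mulVec w0f with hvf
  have hvf_eq : ∀ k, vv k = vf k := by
    intro k
    simp [hvv, CsInvW0, hvf, Matrix.mulVec, dotProduct, hw0f, hw0v]
  have hBm : (Cs μ s)⁻¹ - 1 = (Cs μ s)⁻¹ * (1 - Cs μ s) := by
    rw [Matrix.mul_sub, Matrix.mul_one, Matrix.nonsing_inv_mul _ hCsdet]
  have hdiff : ∀ jj, ‖(vv - w0v : EuclideanSpace ℂ (Fin N)) jj‖ ≤ (N:ℝ)^2 * Γ * m := by
    intro jj
    have he1 : (vv - w0v : EuclideanSpace ℂ (Fin N)) jj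
        = (((Cs μ s)⁻¹ * (1 - Cs μ s)).mulVec w0f) jj := by
      rw [← hBm, Matrix.sub_mulVec, Matrix.one_mulVec]
      have : (vv - w0v : EuclideanSpace ℂ (Fin N)) jj = vv jj - w0v jj := rfl
      rw [this, hvf_eq jj, hvf]
      rfl
    rw [he1]
    have hentry : ∀ k, ‖((Cs μ s)⁻¹ * (1 - Cs μ s)) jj k‖ ≤ (N:ℝ) * Γ * m := by
      intro k
      rw [Matrix.mul_apply]
      calc ‖∑ l, (Cs μ s)⁻¹ jj l * (1 - Cs μ s) l k‖
          ≤ ∑ l, ‖(Cs μ s)⁻¹ jj l * (1 - Cs μ s) l k‖ := norm_sum_le _ _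
        _ ≤ ∑ _l : Fin N, Γ * m := by
            apply Finset.sum_le_sum
            intro l _
            rw [norm_mul]
            exact mul_le_mul (hBent jj l) (hoffd l k) (norm_nonneg _) (le_of_lt hΓ)
        _ = (N:ℝ) * Γ * m := by simp [Finset.sum_const, Finset.card_univ]; ring
    calc ‖(((Cs μ s)⁻¹ * (1 - Cs μ s)).mulVec w0f) jj‖
        = ‖∑ k, ((Cs μ s)⁻¹ * (1 - Cs μ s)) jj k * w0f k‖ := by
          simp [Matrix.mulVec, dotProduct]
      _ ≤ ∑ k, ‖((Cs μ s)⁻¹ * (1 - Cs μ s)) jj k * w0f k‖ := norm_sum_le _ _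
      _ ≤ ∑ _k : Fin N, (N:ℝ) * Γ * m := by
          apply Finset.sum_le_sum
          intro k _
          rw [norm_mul]
          calc ‖((Cs μ s)⁻¹ * (1 - Cs μ s)) jj k‖ * ‖w0f k‖
              ≤ ((N:ℝ) * Γ * m) * 1 :=
                mul_le_mul (hentry k) (hw0coord k) (norm_nonneg _) (by positivity)
            _ = (N:ℝ) * Γ * m := by ring
      _ = (N:ℝ)^2 * Γ * m := by simp [Finset.sum_const, Finset.card_univ]; ring
  have hvmw0 : ‖(vv - w0v : EuclideanSpace ℂ (Fin N))‖ ≤ (N:ℝ)^3 * Γ * m := by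
    calc ‖(vv - w0v : EuclideanSpace ℂ (Fin N))‖ ≤ (N:ℝ) * ((N:ℝ)^2 * Γ * m) :=
          BSSAux.norm_le_of_coords hN0 (by positivity) hdiff
      _ = (N:ℝ)^3 * Γ * m := by ring
  -- the quadratic form
  have hCsv : ∀ i, (∑ j, Cs μ s i j * vf j) = w0f i := by
    intro i
    have h3 : (Cs μ s).mulVec vf = w0f := by
      rw [hvf, Matrix.mulVec_mulVec, Matrix.mul_nonsing_inv _ hCsdet, Matrix.one_mulVec]
    have h2 := congrFun h3 i
    simpa [Matrix.mulVec, dotProduct] using h2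
  have hsum_inner : ∀ (x : EuclideanSpace ℂ (Fin N)),
      (∑ i, conj (x i) * w0f i) = (inner ℂ x w0v : ℂ) := by
    intro x
    rw [PiLp.inner_apply]
    exact Finset.sum_congr rfl fun i _ => by simp [RCLike.inner_apply, hw0f, mul_comm]
  have hQ1 : BSSAux.Qf μ s w0f vf = 1 := by
    unfold BSSAux.Qf
    have h4 : ∀ i : Fin N, (∑ j, conj (w0f i) * Cs μ s i j * vf j)
        = conj (w0f i) * w0f i := by
      intro i
      rw [← hCsv i, Finset.mul_sum]
      congr 1; ext j; ring
    rw [Finset.sum_congr rfl fun i _ => h4 i]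
    have h5 : (∑ i, conj (w0f i) * w0f i) = (inner ℂ w0v w0v : ℂ) := hsum_inner w0v
    rw [h5, inner_self_eq_norm_sq_to_K, hw0n]
    norm_num
  have hQ2 : BSSAux.Qf μ s vf vf = d := by
    unfold BSSAux.Qf
    have h4 : ∀ i : Fin N, (∑ j, conj (vf i) * Cs μ s i j * vf j)
        = conj (vf i) * w0f i := by
      intro i
      rw [← hCsv i, Finset.mul_sum]
      congr 1; ext j; ring
    rw [Finset.sum_congr rfl fun i _ => h4 i]
    have h5 : (∑ i, conj (vf i) * w0f i) = (inner ℂ vv w0v : ℂ) := by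
      rw [← hsum_inner vv]
      exact Finset.sum_congr rfl fun i _ => by rw [hvf_eq i]
    rw [h5, hd]
  have hdre0 : 0 ≤ d.re := by
    rw [← hQ2, BSSAux.Qf_self hs hIs]
    simp only [Complex.ofReal_re]
    positivity
  have hQw0 : ‖BSSAux.Qf μ s w0f w0f‖ ≤ N := by
    unfold BSSAux.Qf
    calc ‖∑ i, ∑ j, conj (w0f i) * Cs μ s i j * w0f j‖
        ≤ ∑ i, ∑ j, ‖conj (w0f i) * Cs μ s i j * w0f j‖ := by
          refine (norm_sum_le _ _).trans (Finset.sum_le_sum fun i _ => norm_sum_le _ _)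
      _ ≤ ∑ i : Fin N, ∑ j : Fin N, ‖w0f i‖ * ‖w0f j‖ := by
          apply Finset.sum_le_sum; intro i _
          apply Finset.sum_le_sum; intro j _
          rw [norm_mul, norm_mul, RCLike.norm_conj]
          calc ‖w0f i‖ * ‖Cs μ s i j‖ * ‖w0f j‖ ≤ ‖w0f i‖ * 1 * ‖w0f j‖ := by
                apply mul_le_mul_of_nonneg_right _ (norm_nonneg _)
                exact mul_le_mul_of_nonneg_left (hCent i j) (norm_nonneg _)
            _ = ‖w0f i‖ * ‖w0f j‖ := by ring
      _ = (∑ i, ‖w0f i‖) * (∑ j, ‖w0f j‖) := by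
          rw [Finset.sum_mul_sum]
      _ = (∑ i, ‖w0f i‖)^2 := (sq (∑ i, ‖w0f i‖)).symm
      _ ≤ (N:ℝ) * ∑ i, ‖w0f i‖^2 := by
          have h6 := Finset.sum_mul_sq_le_sq_mul_sq Finset.univ
            (fun _ : Fin N => (1:ℝ)) (fun i => ‖w0f i‖)
          simpa [Finset.card_univ] using h6
      _ = (N:ℝ) * ‖w0v‖^2 := by
          rw [EuclideanSpace.norm_eq, Real.sq_sqrt
            (Finset.sum_nonneg fun i _ => sq_nonneg _)]
      _ = N := by rw [hw0n]; ring
  have hdre : 1/(N:ℝ) ≤ d.re := by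
    have h7 : (1:ℝ) ≤ (BSSAux.Qf μ s w0f w0f).re * d.re := by
      have h8 := BSSAux.Qf_cs hs hIs w0f vf
      rw [hQ1, hQ2] at h8
      simpa using h8
    have h9 : (BSSAux.Qf μ s w0f w0f).re ≤ N :=
      (Complex.re_le_norm _).trans hQw0
    have h10 : 0 ≤ (BSSAux.Qf μ s w0f w0f).re := by
      rw [BSSAux.Qf_self hs hIs]
      simp only [Complex.ofReal_re]
      positivity
    rw [div_le_iff₀ hNpos]
    nlinarith
  have hdnorm : 1/(N:ℝ) ≤ ‖d‖ := by
    refine hdre.trans ?_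
    exact (le_abs_self _).trans (Complex.abs_re_le_norm d)
  have hdne : d ≠ 0 := by
    intro h
    rw [h] at hdnorm
    simp only [norm_zero] at hdnorm
    have : (0:ℝ) < 1/N := by positivity
    linarith
  -- the decomposition
  set u := uCoef μ s A i1 wv with hu
  have hu_eq : u = (inner ℂ vv wv : ℂ) / d := rfl
  set u0 : ℝ := ‖z‖ - 1 with hu0
  set u1 : ℂ := u - (u0:ℂ) with hu1def
  have hinner_split : (inner ℂ vv wv : ℂ)
      = (inner ℂ w0v wv : ℂ) + (inner ℂ (vv - w0v : EuclideanSpace ℂ (Fin N)) wv : ℂ) := by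
    rw [inner_sub_left]; ring
  have h1md : (1:ℂ) - d = (inner ℂ (w0v - vv : EuclideanSpace ℂ (Fin N)) w0v : ℂ) := by
    rw [inner_sub_left, inner_self_eq_norm_sq_to_K, hw0n, hd]
    push_cast; ring
  have hu0abs : |u0| ≤ 1 := by
    rw [hu0, abs_le]; constructor <;> linarith
  have hnum : u1 * d = (inner ℂ (vv - w0v : EuclideanSpace ℂ (Fin N)) wv : ℂ)
      + ((1:ℂ) - d) * (u0:ℂ) := by
    rw [hu1def, hu_eq, hinner_split, ht]
    field_simp
    push_cast [hu0]
    ring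
  have hu1bound : ‖u1‖ ≤ 3*(N:ℝ)^4*Γ*m := by
    have h1d : ‖(1:ℂ) - d‖ ≤ (N:ℝ)^3*Γ*m := by
      rw [h1md]
      refine (norm_inner_le_norm _ _).trans ?_
      rw [hw0n, mul_one]
      have : (w0v - vv : EuclideanSpace ℂ (Fin N)) = -(vv - w0v) := by abel
      rw [this, norm_neg]
      exact hvmw0
    have hnorm_num : ‖u1 * d‖ ≤ 3*(N:ℝ)^3*Γ*m := by
      rw [hnum]
      calc ‖(inner ℂ (vv - w0v : EuclideanSpace ℂ (Fin N)) wv : ℂ) + ((1:ℂ)-d) * (u0:ℂ)‖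
          ≤ ‖(inner ℂ (vv - w0v : EuclideanSpace ℂ (Fin N)) wv : ℂ)‖ + ‖((1:ℂ)-d) * (u0:ℂ)‖ :=
            norm_add_le _ _
        _ ≤ ‖(vv - w0v : EuclideanSpace ℂ (Fin N))‖ * ‖wv‖ + ‖(1:ℂ)-d‖ * |u0| := by
            have hh1 := norm_inner_le_norm (𝕜 := ℂ)
              (vv - w0v : EuclideanSpace ℂ (Fin N)) wv
            have hh2 : ‖((1:ℂ)-d) * (u0:ℂ)‖ = ‖(1:ℂ)-d‖ * |u0| := by
              rw [norm_mul, Complex.norm_real, Real.norm_eq_abs]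
            rw [hh2]
            linarith
        _ ≤ ((N:ℝ)^3*Γ*m) * 2 + ((N:ℝ)^3*Γ*m) * 1 := by
            have hb1 : ‖(vv - w0v : EuclideanSpace ℂ (Fin N))‖ * ‖wv‖ ≤ ((N:ℝ)^3*Γ*m) * 2 :=
              mul_le_mul hvmw0 hwn2 (norm_nonneg _) (by positivity)
            have hb2 : ‖(1:ℂ)-d‖ * |u0| ≤ ((N:ℝ)^3*Γ*m) * 1 :=
              mul_le_mul h1d hu0abs (abs_nonneg _) (by positivity)
            linarith
        _ = 3*(N:ℝ)^3*Γ*m := by ring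
    have h5 : ‖u1‖ * (1/(N:ℝ)) ≤ 3*(N:ℝ)^3*Γ*m := by
      calc ‖u1‖ * (1/(N:ℝ)) ≤ ‖u1‖ * ‖d‖ :=
            mul_le_mul_of_nonneg_left hdnorm (norm_nonneg u1)
        _ = ‖u1 * d‖ := (norm_mul _ _).symm
        _ ≤ _ := hnorm_num
    calc ‖u1‖ = (‖u1‖ * (1/(N:ℝ))) * N := by field_simp
      _ ≤ (3*(N:ℝ)^3*Γ*m) * N := mul_le_mul_of_nonneg_right h5 (le_of_lt hNpos)
      _ = 3*(N:ℝ)^4*Γ*m := by ring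
  have hu0neg : -1 ≤ u0 := by rw [hu0]; linarith
  have habs_u0 : |u0| = ‖wv‖^2/2 := by
    rw [hu0, abs_of_nonpos (by linarith : ‖z‖ - 1 ≤ 0), hwsq]
    ring
  have hwle : ‖wv‖ ≤ ‖u‖ + P := by
    calc ‖wv‖ = ‖u • w0v + (wv - u • w0v)‖ := by congr 1; abel
      _ ≤ ‖u • w0v‖ + ‖wv - u • w0v‖ := norm_add_le _ _
      _ = ‖u‖ + P := by
          rw [norm_smul, hw0n, mul_one]
          congr 1
  have hu_le : ‖u‖ ≤ |u0| + ‖u1‖ := by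
    calc ‖u‖ = ‖(u0:ℂ) + u1‖ := by rw [hu1def]; congr 1; ring
      _ ≤ ‖(u0:ℂ)‖ + ‖u1‖ := norm_add_le _ _
      _ = |u0| + ‖u1‖ := by rw [Complex.norm_real, Real.norm_eq_abs]
  have hu0bound : |u0| ≤ 4*(3*(N:ℝ)^4*Γ*m + P) := by
    set a := |u0| with ha
    set b := 3*(N:ℝ)^4*Γ*m + P with hb
    have hb0 : 0 ≤ b := by positivity
    have ha0 : 0 ≤ a := abs_nonneg _
    have h2a : 2*a ≤ (a + b)^2 := by
      have hwb : ‖wv‖ ≤ a + b := by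
        calc ‖wv‖ ≤ ‖u‖ + P := hwle
          _ ≤ (a + ‖u1‖) + P := by linarith
          _ ≤ a + b := by rw [hb]; linarith
      have h2b := pow_le_pow_left₀ (norm_nonneg wv) hwb 2
      have h2eq : a = ‖wv‖^2/2 := habs_u0
      linarith
    nlinarith [sq_nonneg (a-b), sq_nonneg (a+b), mul_nonneg ha0 hb0, sq_nonneg b,
      mul_nonneg hb0 hb0, sq_nonneg (1-a), mul_nonneg (mul_nonneg ha0 hb0) hb0,
      mul_nonneg ha0 ha0, hu0abs]
  refine ⟨u0, u1, ?_, hu0neg, ?_, ?_⟩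
  · rw [hu1def]; ring
  · have e1 : (0:ℝ) ≤ 12*(N:ℝ)^4*Γ*P := by positivity
    have hkey : 4*(3*(N:ℝ)^4*Γ*m + P) ≤ (12*(N:ℝ)^4*Γ + 4) * (m + P) := by nlinarith [e1, hm0]
    linarith [hu0bound]
  · have e2 : (0:ℝ) ≤ 9*(N:ℝ)^4*Γ + 4 := by positivity
    have e3 : (0:ℝ) ≤ (9*(N:ℝ)^4*Γ + 4) * m := mul_nonneg e2 hm0
    have hkey : 3*(N:ℝ)^4*Γ*m ≤ (12*(N:ℝ)^4*Γ + 4) * m := by nlinarith [e3]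
    linarith [hu1bound]
end
end

section
/- Let w₀, w ∈ ℂ^N and let t ∈ ℝ be such that w₀ + t·w ≠ 0, and let φ(t) = (w₀ + t·w)/‖w₀ + t·w‖. Then the first three derivatives of φ at t satisfy ‖φ'(t)‖ ≤ 2‖w‖/‖w₀ + t·w‖, ‖φ''(t)‖ ≤ 6‖w‖²/‖w₀ + t·w‖², and ‖φ'''(t)‖ ≤ 36‖w‖³/‖w₀ + t·w‖³. -/
noncomputable section

namespace PhiCurveAux

variable {N : ℕ} (w0 w : EuclideanSpace ℂ (Fin N))

private noncomputable def uu (τ : ℝ) : EuclideanSpace ℂ (Fin N) := w0 + (τ : ℂ) • w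
private noncomputable def gg (τ : ℝ) : ℝ :=
  ‖w0‖ ^ 2 + 2 * (Complex.re (inner ℂ w0 w : ℂ)) * τ + ‖w‖ ^ 2 * τ ^ 2
private noncomputable def gd (τ : ℝ) : ℝ :=
  2 * (Complex.re (inner ℂ w0 w : ℂ)) + 2 * ‖w‖ ^ 2 * τ

private lemma uu_hasDeriv (τ : ℝ) : HasDerivAt (uu w0 w) w τ := by
  have h1 : uu w0 w = fun τ : ℝ => w0 + τ • w := by
    funext τ; rw [uu, Complex.coe_smul]
  rw [h1]
  simpa using ((hasDerivAt_id τ).smul_const w).const_add w0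

private lemma gg_eq (τ : ℝ) : gg w0 w τ = ‖uu w0 w τ‖ ^ 2 := by
  rw [uu, gg, norm_add_sq (𝕜 := ℂ), inner_smul_right, norm_smul]
  rw [mul_pow, Complex.norm_real, Real.norm_eq_abs, sq_abs]
  simp only [RCLike.re_to_complex, Complex.mul_re, Complex.ofReal_re, Complex.ofReal_im]
  ring

private lemma gd_eq (τ : ℝ) : gd w0 w τ = 2 * Complex.re (inner ℂ (uu w0 w τ) w : ℂ) := by
  have hw : Complex.re (inner ℂ w w : ℂ) = ‖w‖ ^ 2 := by
    simpa using inner_self_eq_norm_sq (𝕜 := ℂ) w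
  rw [uu, gd, inner_add_left, inner_smul_left]
  simp only [Complex.add_re, Complex.mul_re, Complex.conj_ofReal, Complex.ofReal_re,
    Complex.ofReal_im, hw]
  ring

private lemma gd_bound (τ : ℝ) : |gd w0 w τ| ≤ 2 * ‖w‖ * ‖uu w0 w τ‖ := by
  rw [gd_eq, abs_mul]
  have h1 : |Complex.re (inner ℂ (uu w0 w τ) w : ℂ)| ≤ ‖(inner ℂ (uu w0 w τ) w : ℂ)‖ := by
    exact Complex.abs_re_le_norm _
  have h2 := norm_inner_le_norm (𝕜 := ℂ) (uu w0 w τ) w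
  have := h1.trans h2
  rw [abs_of_nonneg (by norm_num : (0:ℝ) ≤ 2)]
  nlinarith [norm_nonneg (uu w0 w τ), norm_nonneg w]

private lemma gg_hasDeriv (τ : ℝ) : HasDerivAt (gg w0 w) (gd w0 w τ) τ := by
  have h := (((hasDerivAt_id τ).const_mul (2 * (Complex.re (inner ℂ w0 w : ℂ)))).const_add
      (‖w0‖ ^ 2)).add ((hasDerivAt_pow 2 τ).const_mul (‖w‖ ^ 2))
  refine h.congr_deriv ?_
  simp only [gd]; push_cast; ring

private lemma gd_hasDeriv (τ : ℝ) : HasDerivAt (gd w0 w) (2 * ‖w‖ ^ 2) τ := by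
  have h := ((hasDerivAt_id τ).const_mul (2 * ‖w‖ ^ 2)).const_add
    (2 * (Complex.re (inner ℂ w0 w : ℂ)))
  exact h.congr_deriv (mul_one _)

private lemma gg_rpow_hasDeriv (p p' : ℝ) (hpp : p - 1 = p') (τ : ℝ) (hτ : 0 < gg w0 w τ) :
    HasDerivAt (fun y => gg w0 w y ^ p) (p * (gg w0 w τ ^ p' * gd w0 w τ)) τ := by
  have h := (gg_hasDeriv w0 w τ).rpow_const (p := p) (Or.inl hτ.ne')
  convert h using 1
  rw [hpp]; ring

private noncomputable def pp0 (τ : ℝ) : EuclideanSpace ℂ (Fin N) :=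
  (gg w0 w τ ^ (-(1/2) : ℝ)) • uu w0 w τ
private noncomputable def pp1 (τ : ℝ) : EuclideanSpace ℂ (Fin N) :=
  (gg w0 w τ ^ (-(1/2) : ℝ)) • w
    + (-(1/2) * (gg w0 w τ ^ (-(3/2) : ℝ) * gd w0 w τ)) • uu w0 w τ
private noncomputable def pp2 (τ : ℝ) : EuclideanSpace ℂ (Fin N) :=
  (-(gg w0 w τ ^ (-(3/2) : ℝ) * gd w0 w τ)) • w
    + ((3/4) * (gg w0 w τ ^ (-(5/2) : ℝ) * gd w0 w τ ^ 2)
        - gg w0 w τ ^ (-(3/2) : ℝ) * ‖w‖ ^ 2) • uu w0 w τ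
private noncomputable def pp3 (τ : ℝ) : EuclideanSpace ℂ (Fin N) :=
  ((9/4) * (gg w0 w τ ^ (-(5/2) : ℝ) * gd w0 w τ ^ 2)
      - 3 * (gg w0 w τ ^ (-(3/2) : ℝ) * ‖w‖ ^ 2)) • w
    + ((9/2) * (gg w0 w τ ^ (-(5/2) : ℝ) * (gd w0 w τ * ‖w‖ ^ 2))
        - (15/8) * (gg w0 w τ ^ (-(7/2) : ℝ) * gd w0 w τ ^ 3)) • uu w0 w τ

private lemma pp0_hasDeriv (τ : ℝ) (hτ : 0 < gg w0 w τ) :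
    HasDerivAt (pp0 w0 w) (pp1 w0 w τ) τ :=
  (gg_rpow_hasDeriv w0 w (-(1/2)) (-(3/2)) (by norm_num) τ hτ).smul (uu_hasDeriv w0 w τ)

private lemma pp1_hasDeriv (τ : ℝ) (hτ : 0 < gg w0 w τ) :
    HasDerivAt (pp1 w0 w) (pp2 w0 w τ) τ := by
  have hA := (gg_rpow_hasDeriv w0 w (-(1/2)) (-(3/2)) (by norm_num) τ hτ).smul_const w
  have hBc := ((gg_rpow_hasDeriv w0 w (-(3/2)) (-(5/2)) (by norm_num) τ hτ).mul
      (gd_hasDeriv w0 w τ)).const_mul (-(1/2) : ℝ)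
  have hB := hBc.smul (uu_hasDeriv w0 w τ)
  have h := hA.add hB
  refine h.congr_deriv ?_
  simp only [pp2, Pi.mul_apply, Pi.pow_apply, Pi.neg_apply, Pi.sub_apply]
  module

private lemma pp2_hasDeriv (τ : ℝ) (hτ : 0 < gg w0 w τ) :
    HasDerivAt (pp2 w0 w) (pp3 w0 w τ) τ := by
  have hAc := ((gg_rpow_hasDeriv w0 w (-(3/2)) (-(5/2)) (by norm_num) τ hτ).mul
      (gd_hasDeriv w0 w τ)).neg
  have hA := hAc.smul_const w
  have hBc := (((gg_rpow_hasDeriv w0 w (-(5/2)) (-(7/2)) (by norm_num) τ hτ).mul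
      ((gd_hasDeriv w0 w τ).pow 2)).const_mul ((3/4) : ℝ)).sub
      ((gg_rpow_hasDeriv w0 w (-(3/2)) (-(5/2)) (by norm_num) τ hτ).mul_const (‖w‖ ^ 2))
  have hB := hBc.smul (uu_hasDeriv w0 w τ)
  have h := hA.add hB
  refine h.congr_deriv ?_
  simp only [pp3, Pi.mul_apply, Pi.pow_apply, Pi.neg_apply, Pi.sub_apply]
  push_cast
  module

private lemma sq_rpow (r : ℝ) (hr : 0 ≤ r) (e : ℝ) (n : ℕ) (hn : 2 * e = -(n : ℝ)) :
    (r ^ 2) ^ e = (r ^ n)⁻¹ := by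
  rw [← Real.rpow_natCast r 2, ← Real.rpow_mul hr]
  rw [show ((2 : ℕ) : ℝ) * e = -(n : ℝ) by push_cast; linarith]
  rw [Real.rpow_neg hr, Real.rpow_natCast]

private lemma abs_term (q v s : ℝ) (hv : 0 ≤ v) : |q * (v * s)| = |q| * (v * |s|) := by
  rw [abs_mul, abs_mul, abs_of_nonneg hv]

end PhiCurveAux

open PhiCurveAux in
/-- Bounds on the first three derivatives of
`φ(t) = (w₀ + t·w)/‖w₀ + t·w‖` at a point `t` with `w₀ + t·w ≠ 0`. -/
theorem phiCurve_deriv_bounds (N : ℕ) (w0 w : EuclideanSpace ℂ (Fin N)) (t : ℝ)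
    (h : w0 + (t : ℂ) • w ≠ 0) :
    ‖deriv (fun τ : ℝ => ‖w0 + (τ : ℂ) • w‖⁻¹ • (w0 + (τ : ℂ) • w)) t‖
        ≤ 2 * ‖w‖ / ‖w0 + (t : ℂ) • w‖ ∧
    ‖deriv (deriv (fun τ : ℝ => ‖w0 + (τ : ℂ) • w‖⁻¹ • (w0 + (τ : ℂ) • w))) t‖
        ≤ 6 * ‖w‖ ^ 2 / ‖w0 + (t : ℂ) • w‖ ^ 2 ∧
    ‖deriv (deriv (deriv (fun τ : ℝ => ‖w0 + (τ : ℂ) • w‖⁻¹ • (w0 + (τ : ℂ) • w)))) t‖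
        ≤ 36 * ‖w‖ ^ 3 / ‖w0 + (t : ℂ) • w‖ ^ 3 := by
  set F : ℝ → EuclideanSpace ℂ (Fin N) :=
    fun τ : ℝ => ‖w0 + (τ : ℂ) • w‖⁻¹ • (w0 + (τ : ℂ) • w) with hFdef
  set r : ℝ := ‖w0 + (t : ℂ) • w‖ with hrdef
  have hr : 0 < r := by rw [hrdef]; exact norm_pos_iff.2 h
  -- F agrees with pp0 everywhere
  have hF0 : F = pp0 w0 w := by
    funext τ
    by_cases h0 : w0 + (τ : ℂ) • w = 0
    · simp only [hFdef, pp0]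
      rw [h0, show uu w0 w τ = 0 from h0]
      simp
    · have : gg w0 w τ ^ (-(1/2) : ℝ) = ‖w0 + (τ : ℂ) • w‖⁻¹ := by
        rw [gg_eq w0 w τ]
        rw [show ‖uu w0 w τ‖ = ‖w0 + (τ : ℂ) • w‖ from rfl]
        rw [sq_rpow _ (norm_nonneg _) _ 1 (by norm_num), pow_one]
      simp only [hFdef, pp0, uu, this]
  have ht : 0 < gg w0 w t := by
    rw [gg_eq w0 w t]
    exact pow_pos (norm_pos_iff.2 h) 2
  have hgc : Continuous (gg w0 w) := by unfold gg; fun_prop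
  have hmem : ∀ τ : ℝ, 0 < gg w0 w τ → {x : ℝ | 0 < gg w0 w x} ∈ nhds τ :=
    fun τ hτ => (isOpen_lt continuous_const hgc).mem_nhds hτ
  have hd1 : ∀ τ, 0 < gg w0 w τ → deriv F τ = pp1 w0 w τ := by
    intro τ hτ
    rw [hF0]; exact (pp0_hasDeriv w0 w τ hτ).deriv
  have hd2 : ∀ τ, 0 < gg w0 w τ → deriv (deriv F) τ = pp2 w0 w τ := by
    intro τ hτ
    have he : deriv F =ᶠ[nhds τ] pp1 w0 w :=
      Filter.eventually_of_mem (hmem τ hτ) (fun x hx => hd1 x hx)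
    rw [he.deriv_eq]; exact (pp1_hasDeriv w0 w τ hτ).deriv
  have hd3 : deriv (deriv (deriv F)) t = pp3 w0 w t := by
    have he : deriv (deriv F) =ᶠ[nhds t] pp2 w0 w :=
      Filter.eventually_of_mem (hmem t ht) (fun x hx => hd2 x hx)
    rw [he.deriv_eq]; exact (pp2_hasDeriv w0 w t ht).deriv
  -- rpow evaluations at t
  have hg2 : gg w0 w t = r ^ 2 := by rw [gg_eq w0 w t]; rfl
  have e1 : gg w0 w t ^ (-(1/2) : ℝ) = r⁻¹ := by
    rw [hg2, sq_rpow _ hr.le _ 1 (by norm_num), pow_one]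
  have e3 : gg w0 w t ^ (-(3/2) : ℝ) = (r ^ 3)⁻¹ := by
    rw [hg2, sq_rpow _ hr.le _ 3 (by norm_num)]
  have e5 : gg w0 w t ^ (-(5/2) : ℝ) = (r ^ 5)⁻¹ := by
    rw [hg2, sq_rpow _ hr.le _ 5 (by norm_num)]
  have e7 : gg w0 w t ^ (-(7/2) : ℝ) = (r ^ 7)⁻¹ := by
    rw [hg2, sq_rpow _ hr.le _ 7 (by norm_num)]
  set d : ℝ := gd w0 w t with hddef
  have hDb : |d| ≤ 2 * ‖w‖ * r := by
    rw [hddef, hrdef]; exact gd_bound w0 w t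
  have hD0 : (0:ℝ) ≤ |d| := abs_nonneg d
  set W : ℝ := ‖w‖ with hWdef
  have hW : 0 ≤ W := norm_nonneg w
  have huut : ‖uu w0 w t‖ = r := rfl
  refine ⟨?_, ?_, ?_⟩
  · -- first derivative
    rw [hd1 t ht]
    simp only [pp1, e1, e3]
    refine le_trans (norm_add_le _ _) ?_
    rw [norm_smul, norm_smul, Real.norm_eq_abs, Real.norm_eq_abs, huut]
    have h1 : |r⁻¹| = r⁻¹ := abs_of_nonneg (by positivity)
    have h2 : |(-(1/2) : ℝ) * ((r ^ 3)⁻¹ * d)| ≤ (1/2) * ((r ^ 3)⁻¹ * (2 * W * r)) := by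
      rw [abs_term _ _ _ (by positivity)]
      rw [show |(-(1/2) : ℝ)| = 1/2 by norm_num]
      gcongr
    refine le_trans (add_le_add (mul_le_mul_of_nonneg_right (le_of_eq h1) hW)
      (mul_le_mul_of_nonneg_right h2 hr.le)) (le_of_eq ?_)
    field_simp
    ring
  · -- second derivative
    rw [hd2 t ht]
    simp only [pp2, e3, e5]
    refine le_trans (norm_add_le _ _) ?_
    rw [norm_smul, norm_smul, Real.norm_eq_abs, Real.norm_eq_abs, huut]
    have h1 : |-((r ^ 3)⁻¹ * d)| ≤ (r ^ 3)⁻¹ * (2 * W * r) := by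
      rw [abs_neg, abs_mul, abs_of_nonneg (by positivity : (0:ℝ) ≤ (r ^ 3)⁻¹)]
      gcongr
    have h2 : |(3/4) * ((r ^ 5)⁻¹ * d ^ 2) - (r ^ 3)⁻¹ * W ^ 2|
        ≤ (3/4) * ((r ^ 5)⁻¹ * (2 * W * r) ^ 2) + (r ^ 3)⁻¹ * W ^ 2 := by
      refine (abs_sub _ _).trans (add_le_add ?_ ?_)
      · rw [abs_term _ _ _ (by positivity), abs_pow]
        rw [show |(3/4 : ℝ)| = 3/4 by norm_num]
        gcongr
      · rw [abs_of_nonneg (by positivity : (0:ℝ) ≤ (r ^ 3)⁻¹ * W ^ 2)]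
    refine le_trans (add_le_add (mul_le_mul_of_nonneg_right h1 hW)
      (mul_le_mul_of_nonneg_right h2 hr.le)) (le_of_eq ?_)
    field_simp
    ring
  · -- third derivative
    rw [hd3]
    simp only [pp3, e3, e5, e7]
    refine le_trans (norm_add_le _ _) ?_
    rw [norm_smul, norm_smul, Real.norm_eq_abs, Real.norm_eq_abs, huut]
    have h1 : |(9/4) * ((r ^ 5)⁻¹ * d ^ 2) - 3 * ((r ^ 3)⁻¹ * W ^ 2)|
        ≤ (9/4) * ((r ^ 5)⁻¹ * (2 * W * r) ^ 2) + 3 * ((r ^ 3)⁻¹ * W ^ 2) := by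
      refine (abs_sub _ _).trans (add_le_add ?_ ?_)
      · rw [abs_term _ _ _ (by positivity), abs_pow]
        rw [show |(9/4 : ℝ)| = 9/4 by norm_num]
        gcongr
      · rw [abs_term _ _ _ (by positivity)]
        rw [show |(3 : ℝ)| = 3 by norm_num]
        rw [abs_of_nonneg (by positivity : (0:ℝ) ≤ W ^ 2)]
    have h2 : |(9/2) * ((r ^ 5)⁻¹ * (d * W ^ 2)) - (15/8) * ((r ^ 7)⁻¹ * d ^ 3)|
        ≤ (9/2) * ((r ^ 5)⁻¹ * (2 * W * r * W ^ 2))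
          + (15/8) * ((r ^ 7)⁻¹ * (2 * W * r) ^ 3) := by
      refine (abs_sub _ _).trans (add_le_add ?_ ?_)
      · rw [abs_term _ _ _ (by positivity), abs_mul]
        rw [show |(9/2 : ℝ)| = 9/2 by norm_num]
        rw [abs_of_nonneg (by positivity : (0:ℝ) ≤ W ^ 2)]
        gcongr
      · rw [abs_term _ _ _ (by positivity), abs_pow]
        rw [show |(15/8 : ℝ)| = 15/8 by norm_num]
        gcongr
    refine le_trans (add_le_add (mul_le_mul_of_nonneg_right h1 hW)
      (mul_le_mul_of_nonneg_right h2 hr.le)) (le_of_eq ?_)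
    field_simp
    ring
end
end
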